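/- Let P ⊂ R^n be a full-dimensional polytope with 0 in its interior, F a proper face, and π: R^n → R^d a surjective linear map with dual setup as in the Projection Lemma. Then F is strictly preserved under π (π(F) is a face of π(P), combinatorially isomorphic to F, and π^{-1}(π(F)) ∩ P = F) if and only if 0 lies in the interior of q*(F^◇). -/

import Mathlib

open Matrix

private lemma dot_repr {m : ℕ} (l : (Fin m → ℝ) →L[ℝ] ℝ) :
    ∃ v : Fin m → ℝ, ∀ x, l x = v ⬝ᵥ x := by
  refine ⟨fun i => l (fun j => if i = j then 1 else 0), fun x => ?_⟩
  have := LinearMap.pi_apply_eq_sum_univ (l : (Fin m → ℝ) →ₗ[ℝ] ℝ) x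
  simp only [ContinuousLinearMap.coe_coe] at this
  rw [this, dotProduct]
  exact Finset.sum_congr rfl fun i _ => by rw [smul_eq_mul, mul_comm]

private lemma vec_eq_zero_of_dot {m : ℕ} (z : Fin m → ℝ) (h : ∀ w, z ⬝ᵥ w = 0) : z = 0 := by
  have := h z
  rwa [dotProduct_self_eq_zero] at this

private lemma dot_le_norm {m : ℕ} (a b : Fin m → ℝ) : a ⬝ᵥ b ≤ (m : ℝ) * ‖a‖ * ‖b‖ := by
  rw [dotProduct]
  calc ∑ i, a i * b i ≤ ∑ _i : Fin m, ‖a‖ * ‖b‖ := by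
        refine Finset.sum_le_sum fun i _ => ?_
        calc a i * b i ≤ |a i * b i| := le_abs_self _
        _ = |a i| * |b i| := abs_mul _ _
        _ ≤ ‖a‖ * ‖b‖ := by
            apply mul_le_mul (norm_le_pi_norm a i) (norm_le_pi_norm b i) (abs_nonneg _)
              (norm_nonneg _)
    _ = (m : ℝ) * ‖a‖ * ‖b‖ := by simp [Finset.sum_const, mul_assoc]

private lemma aux_ann {m : ℕ} (V : Submodule ℝ (Fin m → ℝ)) {x : Fin m → ℝ} (hx : x ∉ V) :
    ∃ w : Fin m → ℝ, (∀ v ∈ V, v ⬝ᵥ w = 0) ∧ x ⬝ᵥ w ≠ 0 := by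
  classical
  let e : EuclideanSpace ℝ (Fin m) ≃ₗ[ℝ] (Fin m → ℝ) := WithLp.linearEquiv 2 ℝ _
  let V' : Submodule ℝ (EuclideanSpace ℝ (Fin m)) := V.comap e.toLinearMap
  have hx' : e.symm x ∉ V' := by
    simp only [V', Submodule.mem_comap, LinearEquiv.coe_coe, LinearEquiv.apply_symm_apply]
    exact hx
  obtain ⟨y, hy, z, hz, hxyz⟩ := V'.exists_add_mem_mem_orthogonal (e.symm x)
  have hz0 : z ≠ 0 := by
    rintro rfl
    rw [add_zero] at hxyz
    exact hx' (hxyz ▸ hy)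
  have hinner : ∀ a : EuclideanSpace ℝ (Fin m), (e a) ⬝ᵥ (e z) = inner ℝ a z := by
    intro a
    rw [PiLp.inner_apply, dotProduct]
    simp [e, RCLike.inner_apply, mul_comm]
  refine ⟨e z, fun v hv => ?_, ?_⟩
  · have : (e (e.symm v)) ⬝ᵥ (e z) = inner ℝ (e.symm v) z := hinner _
    rw [LinearEquiv.apply_symm_apply] at this
    rw [this]
    exact (Submodule.mem_orthogonal V' z).mp hz _ (by simp only [V', Submodule.mem_comap, LinearEquiv.coe_coe, LinearEquiv.apply_symm_apply]; exact hv)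
  · have : (e (e.symm x)) ⬝ᵥ (e z) = inner ℝ (e.symm x) z := hinner _
    rw [LinearEquiv.apply_symm_apply] at this
    rw [this, hxyz, inner_add_left]
    rw [(Submodule.mem_orthogonal V' z).mp hz _ hy, zero_add]
    exact fun h => hz0 (inner_self_eq_zero.mp h)


private lemma dot_lin {n : ℕ} (g : Fin n → ℝ) : IsLinearMap ℝ (fun x : Fin n → ℝ => g ⬝ᵥ x) :=
  ⟨fun a b => by simp [dotProduct_add], fun c a => by simp [dotProduct_smul]⟩

private def dotL {n : ℕ} (g : Fin n → ℝ) : (Fin n → ℝ) →ₗ[ℝ] ℝ :=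
  (dot_lin g).mk' _

private lemma triple_of_exact (n d : ℕ) (P F : Set (Fin n → ℝ))
    (π : (Fin n → ℝ) →ₗ[ℝ] (Fin d → ℝ)) (hπ : Function.Surjective π)
    (q : (Fin (n - d) → ℝ) →ₗ[ℝ] (Fin n → ℝ))
    (hexact : LinearMap.range q = LinearMap.ker π)
    (qs : (Fin n → ℝ) →ₗ[ℝ] (Fin (n - d) → ℝ))
    (hqs : ∀ v w, qs v ⬝ᵥ w = v ⬝ᵥ q w)
    (hFP : F ⊆ P)
    (ℓ : Fin n → ℝ) (h1 : ∀ x ∈ P, ℓ ⬝ᵥ x ≤ 1) (h2 : ∀ x ∈ F, ℓ ⬝ᵥ x = 1)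
    (h3 : ∀ x ∈ P, ℓ ⬝ᵥ x = 1 → x ∈ F) (h4 : qs ℓ = 0)
    (hball : ∀ w : Fin (n-d) → ℝ,
      (∀ g : Fin n → ℝ, (∀ x ∈ P, g ⬝ᵥ x ≤ 1) → (∀ x ∈ F, g ⬝ᵥ x = 1) → (qs g) ⬝ᵥ w ≤ 0) →
        w = 0)
    (hFne : F.Nonempty) :
    IsExposed ℝ (π '' P) (π '' F) ∧ Set.InjOn π F ∧ π ⁻¹' (π '' F) ∩ P = F := by
  obtain ⟨f₀, hf₀⟩ := hFne
  have hker : ∀ v : Fin n → ℝ, π v = 0 → ℓ ⬝ᵥ v = 0 := by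
    intro v hv
    have : v ∈ LinearMap.range q := hexact ▸ (LinearMap.mem_ker.2 hv)
    obtain ⟨w, rfl⟩ := this
    rw [← hqs, h4, zero_dotProduct]
  -- the "x - y in kernel implies equal" trick
  have key : ∀ x ∈ P, ∀ y ∈ F, π x = π y → x = y := by
    intro x hx y hy hxy
    have : x - y ∈ LinearMap.range q := by
      rw [hexact, LinearMap.mem_ker, map_sub, hxy, sub_self]
    obtain ⟨w, hw⟩ := this
    have hw0 : w = 0 := by
      refine hball w fun g hg1 hg2 => ?_
      have h5 : qs g ⬝ᵥ w = g ⬝ᵥ (x - y) := by rw [hqs, hw]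
      rw [h5, dotProduct_sub, hg2 y hy]
      have := hg1 x hx
      linarith
    rw [hw0, map_zero] at hw
    exact sub_eq_zero.mp hw.symm
  obtain ⟨σ, hσ⟩ := π.exists_rightInverse_of_surjective (LinearMap.range_eq_top.2 hπ)
  have hσap : ∀ y, π (σ y) = y := fun y => by
    have := LinearMap.congr_fun hσ y; simpa using this
  set cL : (Fin d → ℝ) →ₗ[ℝ] ℝ := (dotL ℓ).comp σ with hcL
  let c : (Fin d → ℝ) →L[ℝ] ℝ := LinearMap.toContinuousLinearMap cL
  have hc : ∀ y, c y = ℓ ⬝ᵥ σ y := fun y => by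
    simp [c, cL, dotL, IsLinearMap.mk'_apply]
  have hcπ : ∀ x, c (π x) = ℓ ⬝ᵥ x := by
    intro x
    have hk : π (σ (π x) - x) = 0 := by rw [map_sub, hσap, sub_self]
    have h6 := hker _ hk
    rw [dotProduct_sub] at h6
    rw [hc]
    linarith
  have hexp : IsExposed ℝ (π '' P) (π '' F) := by
    intro _
    refine ⟨c, ?_⟩
    ext y
    constructor
    · rintro ⟨f, hf, rfl⟩
      refine ⟨⟨f, hFP hf, rfl⟩, ?_⟩
      rintro z ⟨x, hxP, rfl⟩
      rw [hcπ, hcπ, h2 f hf]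
      exact h1 x hxP
    · rintro ⟨⟨x, hxP, rfl⟩, hmax⟩
      have h1x := h1 x hxP
      have hge : (1:ℝ) ≤ c (π x) := by
        have := hmax (π f₀) ⟨f₀, hFP hf₀, rfl⟩
        rwa [hcπ, h2 f₀ hf₀] at this
      rw [hcπ] at hge
      exact ⟨x, h3 x hxP (le_antisymm h1x hge), rfl⟩
  refine ⟨hexp, fun x hx y hy hxy => key x (hFP hx) y hy hxy, ?_⟩
  ext x
  constructor
  · rintro ⟨⟨f, hf, hfx⟩, hxP⟩
    have hxf : x = f := key x hxP f hf hfx.symm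
    rw [hxf]; exact hf
  · intro hxF
    exact ⟨⟨x, hxF, rfl⟩, hFP hxF⟩


private lemma ball_prop {n d : ℕ} {P F : Set (Fin n → ℝ)}
    {qs : (Fin n → ℝ) →ₗ[ℝ] (Fin (n - d) → ℝ)} {ε : ℝ} (hε : 0 < ε)
    (hball : Metric.ball (0 : Fin (n-d) → ℝ) ε ⊆
      qs '' {ℓ : Fin n → ℝ | (∀ x ∈ P, ℓ ⬝ᵥ x ≤ 1) ∧ ∀ x ∈ F, ℓ ⬝ᵥ x = 1}) :
    ∀ w : Fin (n-d) → ℝ,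
      (∀ g : Fin n → ℝ, (∀ x ∈ P, g ⬝ᵥ x ≤ 1) → (∀ x ∈ F, g ⬝ᵥ x = 1) → (qs g) ⬝ᵥ w ≤ 0) →
        w = 0 := by
  intro w hw
  by_contra hw0
  have hww : 0 < w ⬝ᵥ w := by
    rcases lt_or_eq_of_le (Finset.sum_nonneg fun i _ => mul_self_nonneg (w i) :
      (0:ℝ) ≤ w ⬝ᵥ w) with h | h
    · exact h
    · exact absurd (dotProduct_self_eq_zero.mp h.symm) hw0
  have hwn : 0 < ‖w‖ := norm_pos_iff.2 hw0
  set c : ℝ := ε / (2 * ‖w‖) with hc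
  have hcpos : 0 < c := div_pos hε (by positivity)
  have hzball : c • w ∈ Metric.ball (0 : Fin (n-d) → ℝ) ε := by
    rw [Metric.mem_ball, dist_zero_right, norm_smul, Real.norm_eq_abs, abs_of_pos hcpos, hc]
    rw [div_mul_eq_mul_div, mul_comm]
    rw [div_lt_iff₀ (by positivity)]
    nlinarith
  obtain ⟨g, hgK, hgz⟩ := hball hzball
  have := hw g hgK.1 hgK.2
  rw [hgz, smul_dotProduct, smul_eq_mul] at this
  nlinarith [mul_pos hcpos hww]


private lemma dot_repr' {m : ℕ} (l : (Fin m → ℝ) →L[ℝ] ℝ) :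
    ∃ v : Fin m → ℝ, ∀ x, l x = v ⬝ᵥ x := by
  refine ⟨fun i => l (fun j => if i = j then 1 else 0), fun x => ?_⟩
  have := LinearMap.pi_apply_eq_sum_univ (l : (Fin m → ℝ) →ₗ[ℝ] ℝ) x
  simp only [ContinuousLinearMap.coe_coe] at this
  rw [this, dotProduct]
  exact Finset.sum_congr rfl fun i _ => by rw [smul_eq_mul, mul_comm]

private lemma exists_exact {n : ℕ} {P F : Set (Fin n → ℝ)}
    (h0 : (0 : Fin n → ℝ) ∈ interior P)
    (hF : IsExposed ℝ P F) (hFne : F.Nonempty) (hFproper : F ≠ P) :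
    ∃ ℓ₁ : Fin n → ℝ, (∀ x ∈ P, ℓ₁ ⬝ᵥ x ≤ 1) ∧ (∀ x ∈ F, ℓ₁ ⬝ᵥ x = 1) ∧
      (∀ x ∈ P, ℓ₁ ⬝ᵥ x = 1 → x ∈ F) := by
  obtain ⟨l, hl⟩ := hF hFne
  obtain ⟨f₀, hf₀⟩ := hFne
  have hf₀P : f₀ ∈ P := hF.subset hf₀
  have hmax : ∀ y ∈ P, l y ≤ l f₀ := by
    have := hl ▸ hf₀
    exact this.2
  obtain ⟨r, hr, hrP⟩ := Metric.mem_nhds_iff.mp (mem_interior_iff_mem_nhds.mp h0)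
  set α := l f₀ with hαdef
  have hα : 0 < α := by
    by_cases hl0 : ∀ x, l x = 0
    · exfalso
      apply hFproper
      rw [hl]
      ext x
      simp [hl0]
    · push_neg at hl0
      obtain ⟨x₁, hx₁⟩ := hl0
      have hx2 : ∃ x₂ : Fin n → ℝ, 0 < l x₂ := by
        rcases hx₁.lt_or_gt with h | h
        · exact ⟨-x₁, by simpa using h⟩
        · exact ⟨x₁, h⟩
      obtain ⟨x₂, hx₂⟩ := hx2
      have hx₂0 : x₂ ≠ 0 := by rintro rfl; simp at hx₂
      have hn : 0 < ‖x₂‖ := norm_pos_iff.2 hx₂0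
      set p := (r / (2 * ‖x₂‖)) • x₂ with hp
      have hpP : p ∈ P := by
        apply hrP
        rw [Metric.mem_ball, dist_zero_right, hp, norm_smul, Real.norm_eq_abs,
          abs_of_pos (by positivity)]
        rw [div_mul_eq_mul_div]
        rw [div_lt_iff₀ (by positivity)]
        nlinarith
      have := hmax p hpP
      rw [hp, l.map_smul, smul_eq_mul] at this
      have hlp : 0 < (r / (2 * ‖x₂‖)) * l x₂ := by positivity
      linarith
  obtain ⟨v, hv⟩ := dot_repr' l
  refine ⟨α⁻¹ • v, fun x hx => ?_, fun x hx => ?_, fun x hx hx1 => ?_⟩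
  · rw [smul_dotProduct, ← hv, smul_eq_mul]
    rw [← inv_mul_cancel₀ hα.ne']
    exact mul_le_mul_of_nonneg_left (hmax x hx) (by positivity)
  · have hxm := hl ▸ hx
    have hlx : l x = α := le_antisymm (hmax x (hF.subset hx)) (hxm.2 f₀ hf₀P)
    rw [smul_dotProduct, ← hv, smul_eq_mul, hlx, inv_mul_cancel₀ hα.ne']
  · rw [smul_dotProduct, ← hv, smul_eq_mul] at hx1
    have hlx : l x = α := by
      field_simp at hx1
      linarith [hx1]
    rw [hl]
    exact ⟨hx, fun y hy => by rw [hlx]; exact hmax y hy⟩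


section
variable {n d : ℕ} {P F : Set (Fin n → ℝ)}

private lemma backward
    (h0 : (0 : Fin n → ℝ) ∈ interior P)
    (π : (Fin n → ℝ) →ₗ[ℝ] (Fin d → ℝ)) (hπ : Function.Surjective π)
    (q : (Fin (n - d) → ℝ) →ₗ[ℝ] (Fin n → ℝ))
    (hexact : LinearMap.range q = LinearMap.ker π)
    (qs : (Fin n → ℝ) →ₗ[ℝ] (Fin (n - d) → ℝ))
    (hqs : ∀ v w, qs v ⬝ᵥ w = v ⬝ᵥ q w)
    (hF : IsExposed ℝ P F) (hFne : F.Nonempty) (hFproper : F ≠ P)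
    (hint : (0 : Fin (n - d) → ℝ) ∈ interior
        (qs '' {ℓ : Fin n → ℝ | (∀ x ∈ P, ℓ ⬝ᵥ x ≤ 1) ∧ ∀ x ∈ F, ℓ ⬝ᵥ x = 1})) :
    IsExposed ℝ (π '' P) (π '' F) ∧ Set.InjOn π F ∧ π ⁻¹' (π '' F) ∩ P = F := by
  obtain ⟨ε, hε, hball⟩ := Metric.mem_nhds_iff.mp (mem_interior_iff_mem_nhds.mp hint)
  obtain ⟨ℓ₁, hℓ₁1, hℓ₁2, hℓ₁3⟩ := exists_exact h0 hF hFne hFproper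
  set u₁ := qs ℓ₁ with hu₁
  set τ : ℝ := ε / (2 * (‖u₁‖ + 1)) with hτdef
  have hτ : 0 < τ := by positivity
  have h1τ : (0:ℝ) < 1 + τ := by positivity
  have hzball : (-τ) • u₁ ∈ Metric.ball (0 : Fin (n-d) → ℝ) ε := by
    rw [Metric.mem_ball, dist_zero_right, norm_smul, Real.norm_eq_abs, abs_neg,
      abs_of_pos hτ, hτdef]
    rw [div_mul_eq_mul_div, div_lt_iff₀ (by positivity)]
    nlinarith [norm_nonneg u₁]
  obtain ⟨g, hgK, hgz⟩ := hball hzball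
  set a : ℝ := 1 / (1 + τ) with hadef
  set b : ℝ := τ / (1 + τ) with hbdef
  have ha : 0 < a := by positivity
  have hb : 0 < b := by positivity
  have hab : a + b = 1 := by rw [hadef, hbdef]; field_simp
  set ℓ : Fin n → ℝ := a • g + b • ℓ₁ with hℓdef
  have hdot : ∀ x, ℓ ⬝ᵥ x = a * (g ⬝ᵥ x) + b * (ℓ₁ ⬝ᵥ x) := fun x => by
    rw [hℓdef, add_dotProduct, smul_dotProduct, smul_dotProduct, smul_eq_mul, smul_eq_mul]
  have h1 : ∀ x ∈ P, ℓ ⬝ᵥ x ≤ 1 := by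
    intro x hx
    rw [hdot]
    have := hgK.1 x hx
    have := hℓ₁1 x hx
    nlinarith
  have h2 : ∀ x ∈ F, ℓ ⬝ᵥ x = 1 := by
    intro x hx
    rw [hdot, hgK.2 x hx, hℓ₁2 x hx, mul_one, mul_one, hab]
  have h3 : ∀ x ∈ P, ℓ ⬝ᵥ x = 1 → x ∈ F := by
    intro x hx hx1
    refine hℓ₁3 x hx ?_
    by_contra hne
    have hlt : ℓ₁ ⬝ᵥ x < 1 := lt_of_le_of_ne (hℓ₁1 x hx) hne
    have := hgK.1 x hx
    rw [hdot] at hx1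
    nlinarith
  have h4 : qs ℓ = 0 := by
    rw [hℓdef, map_add, qs.map_smul, qs.map_smul, hgz, smul_smul, ← hu₁, ← add_smul]
    have : a * -τ + b = 0 := by rw [hadef, hbdef]; field_simp; ring
    rw [this, zero_smul]
  exact triple_of_exact n d P F π hπ q hexact qs hqs hF.subset ℓ h1 h2 h3 h4
    (fun w hw => ball_prop hε hball w fun g' hg1 hg2 => hw g' hg1 hg2) hFne

end


section
variable {n d : ℕ} {P F : Set (Fin n → ℝ)}

private lemma pos_of_max (h0 : (0 : Fin n → ℝ) ∈ interior P) {u : Fin n → ℝ} (hu : u ≠ 0)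
    {α : ℝ} (hmax : ∀ y ∈ P, u ⬝ᵥ y ≤ α) : 0 < α := by
  obtain ⟨r, hr, hrP⟩ := Metric.mem_nhds_iff.mp (mem_interior_iff_mem_nhds.mp h0)
  have hn : 0 < ‖u‖ := norm_pos_iff.2 hu
  have huu : 0 < u ⬝ᵥ u := by
    rcases lt_or_eq_of_le (Finset.sum_nonneg fun i _ => mul_self_nonneg (u i) :
      (0:ℝ) ≤ u ⬝ᵥ u) with h | h
    · exact h
    · exact absurd (dotProduct_self_eq_zero.mp h.symm) hu
  have hpP : (r / (2 * ‖u‖)) • u ∈ P := by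
    apply hrP
    rw [Metric.mem_ball, dist_zero_right, norm_smul, Real.norm_eq_abs,
      abs_of_pos (by positivity)]
    rw [div_mul_eq_mul_div, div_lt_iff₀ (by positivity)]
    nlinarith
  have := hmax _ hpP
  rw [dotProduct_smul, smul_eq_mul] at this
  nlinarith [mul_pos (div_pos hr (by positivity : (0:ℝ) < 2*‖u‖)) huu]

private lemma exact_of_triple
    (h0 : (0 : Fin n → ℝ) ∈ interior P)
    (π : (Fin n → ℝ) →ₗ[ℝ] (Fin d → ℝ)) (hπ : Function.Surjective π)
    (q : (Fin (n - d) → ℝ) →ₗ[ℝ] (Fin n → ℝ))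
    (hexact : LinearMap.range q = LinearMap.ker π)
    (qs : (Fin n → ℝ) →ₗ[ℝ] (Fin (n - d) → ℝ))
    (hqs : ∀ v w, qs v ⬝ᵥ w = v ⬝ᵥ q w)
    (hFP : F ⊆ P) (hFne : F.Nonempty) (hFproper : F ≠ P)
    (hexp : IsExposed ℝ (π '' P) (π '' F))
    (hpre : π ⁻¹' (π '' F) ∩ P = F) :
    ∃ ℓ : Fin n → ℝ, (∀ x ∈ P, ℓ ⬝ᵥ x ≤ 1) ∧ (∀ x ∈ F, ℓ ⬝ᵥ x = 1) ∧
      (∀ x ∈ P, ℓ ⬝ᵥ x = 1 → x ∈ F) ∧ qs ℓ = 0 := by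
  obtain ⟨f₀, hf₀⟩ := hFne
  obtain ⟨c, hc⟩ := hexp ⟨π f₀, f₀, hf₀, rfl⟩
  obtain ⟨u, hu⟩ := dot_repr' (c.comp (LinearMap.toContinuousLinearMap π))
  have hud : ∀ x, c (π x) = u ⬝ᵥ x := by
    intro x
    have := hu x
    simpa using this
  have hmaxF : ∀ f ∈ F, ∀ y ∈ P, c (π y) ≤ c (π f) := by
    intro f hf y hy
    have hm : π f ∈ π '' F := ⟨f, hf, rfl⟩
    rw [hc] at hm
    exact hm.2 (π y) ⟨y, hy, rfl⟩
  set α := c (π f₀) with hα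
  have hmax : ∀ y ∈ P, u ⬝ᵥ y ≤ α := fun y hy => by
    rw [← hud]; exact hmaxF f₀ hf₀ y hy
  have hu0 : u ≠ 0 := by
    rintro rfl
    apply hFproper
    have himg : π '' F = π '' P := by
      rw [hc]
      ext y
      constructor
      · exact fun h => h.1
      · rintro ⟨x, hx, rfl⟩
        refine ⟨⟨x, hx, rfl⟩, ?_⟩
        rintro z ⟨x', hx', rfl⟩
        rw [hud, hud, zero_dotProduct, zero_dotProduct]
      
    apply Set.Subset.antisymm hFP
    intro x hx
    rw [← hpre]
    exact ⟨by rw [Set.mem_preimage, himg]; exact ⟨x, hx, rfl⟩, hx⟩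
  have hαpos : 0 < α := pos_of_max h0 hu0 hmax
  refine ⟨α⁻¹ • u, fun x hx => ?_, fun x hx => ?_, fun x hx hx1 => ?_, ?_⟩
  · rw [smul_dotProduct, smul_eq_mul, ← inv_mul_cancel₀ hαpos.ne']
    exact mul_le_mul_of_nonneg_left (hmax x hx) (by positivity)
  · have h1 : u ⬝ᵥ x ≤ α := hmax x (hFP hx)
    have h2 : α ≤ u ⬝ᵥ x := by
      rw [← hud, hα]
      exact hmaxF x hx f₀ (hFP hf₀)
    rw [smul_dotProduct, smul_eq_mul, le_antisymm h1 h2, inv_mul_cancel₀ hαpos.ne']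
  · rw [smul_dotProduct, smul_eq_mul] at hx1
    have hux : u ⬝ᵥ x = α := by
      field_simp at hx1
      linarith
    have hmem : π x ∈ π '' F := by
      rw [hc]
      refine ⟨⟨x, hx, rfl⟩, ?_⟩
      rintro z ⟨x', hx', rfl⟩
      rw [hud, hud, hux]
      exact hmax x' hx'
    rw [← hpre]
    exact ⟨hmem, hx⟩
  · apply vec_eq_zero_of_dot
    intro w
    rw [hqs, smul_dotProduct, smul_eq_mul, ← hud]
    have : π (q w) = 0 := by
      have : q w ∈ LinearMap.ker π := hexact ▸ LinearMap.mem_range_self q w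
      exact this
    rw [this, map_zero, mul_zero]

end


private lemma dot_sum' {n : ℕ} (ℓ : Fin n → ℝ) {ι : Type*} (s : Finset ι) (f : ι → Fin n → ℝ) :
    ℓ ⬝ᵥ (∑ i ∈ s, f i) = ∑ i ∈ s, ℓ ⬝ᵥ f i := by
  exact map_sum (dotL ℓ) f s

private lemma forward_interior (n d : ℕ) (S : Finset (Fin n → ℝ)) {P F : Set (Fin n → ℝ)}
    (hP : P = convexHull ℝ (S : Set (Fin n → ℝ)))
    (π : (Fin n → ℝ) →ₗ[ℝ] (Fin d → ℝ))
    (q : (Fin (n - d) → ℝ) →ₗ[ℝ] (Fin n → ℝ)) (hq : Function.Injective q)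
    (hexact : LinearMap.range q = LinearMap.ker π)
    (qs : (Fin n → ℝ) →ₗ[ℝ] (Fin (n - d) → ℝ))
    (hqs : ∀ v w, qs v ⬝ᵥ w = v ⬝ᵥ q w)
    (hFP : F ⊆ P) (hFne : F.Nonempty) (hFproper : F ≠ P) (hFconv : Convex ℝ F)
    (hinj : Set.InjOn π F)
    (ℓ : Fin n → ℝ) (h1 : ∀ x ∈ P, ℓ ⬝ᵥ x ≤ 1) (h2 : ∀ x ∈ F, ℓ ⬝ᵥ x = 1)
    (h3 : ∀ x ∈ P, ℓ ⬝ᵥ x = 1 → x ∈ F) (h4 : qs ℓ = 0) :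
    (0 : Fin (n - d) → ℝ) ∈ interior
        (qs '' {g : Fin n → ℝ | (∀ x ∈ P, g ⬝ᵥ x ≤ 1) ∧ ∀ x ∈ F, g ⬝ᵥ x = 1}) := by
  classical
  have hSP : ∀ s ∈ S, s ∈ P := fun s hs => hP ▸ subset_convexHull ℝ _ hs
  set T : Finset (Fin n → ℝ) := S.filter (fun s => s ∈ F) with hTdef
  have hTF : ∀ s ∈ T, s ∈ F := fun s hs => (Finset.mem_filter.mp hs).2
  have hTS : T ⊆ S := Finset.filter_subset _ _
  -- F is contained in the convex hull of T
  have hFT : F ⊆ convexHull ℝ (T : Set (Fin n → ℝ)) := by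
    intro x hx
    have hxP := hFP hx
    rw [hP, Finset.mem_convexHull'] at hxP
    obtain ⟨w, hw0, hw1, hwx⟩ := hxP
    have hterm : ∀ s ∈ S, 0 ≤ w s * (1 - ℓ ⬝ᵥ s) := by
      intro s hs
      have := h1 s (hSP s hs)
      have := hw0 s hs
      nlinarith
    have hsum0 : ∑ s ∈ S, w s * (1 - ℓ ⬝ᵥ s) = 0 := by
      have hx1 : ℓ ⬝ᵥ x = 1 := h2 x hx
      rw [← hwx, dot_sum'] at hx1
      have : ∀ s ∈ S, ℓ ⬝ᵥ (w s • s) = w s * (ℓ ⬝ᵥ s) := fun s _ => by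
        rw [dotProduct_smul, smul_eq_mul]
      rw [Finset.sum_congr rfl this] at hx1
      have expand : ∑ s ∈ S, w s * (1 - ℓ ⬝ᵥ s) =
          (∑ s ∈ S, w s) - ∑ s ∈ S, w s * (ℓ ⬝ᵥ s) := by
        rw [← Finset.sum_sub_distrib]
        exact Finset.sum_congr rfl fun s _ => by ring
      rw [expand, hw1, hx1, sub_self]
    have hkey : ∀ s ∈ S, s ∉ T → w s = 0 := by
      intro s hs hsT
      have hz := (Finset.sum_eq_zero_iff_of_nonneg hterm).mp hsum0 s hs
      have hne1 : ℓ ⬝ᵥ s ≠ 1 := fun h =>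
        hsT (Finset.mem_filter.mpr ⟨hs, h3 s (hSP s hs) h⟩)
      have hlt : ℓ ⬝ᵥ s < 1 := lt_of_le_of_ne (h1 s (hSP s hs)) hne1
      rcases mul_eq_zero.mp hz with h | h
      · exact h
      · exfalso; nlinarith
    rw [Finset.mem_convexHull']
    refine ⟨w, fun y hy => hw0 y (hTS hy), ?_, ?_⟩
    · rw [Finset.sum_subset hTS (fun s hs hns => hkey s hs hns)]
      exact hw1
    · rw [Finset.sum_subset hTS (fun s hs hns => by rw [hkey s hs hns, zero_smul])]
      exact hwx
  have hconvTF : convexHull ℝ (T : Set (Fin n → ℝ)) ⊆ F :=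
    convexHull_min (fun s hs => hTF s (Finset.mem_coe.mp hs)) hFconv
  have hTne : T.Nonempty := by
    by_contra hne
    rw [Finset.not_nonempty_iff_eq_empty] at hne
    obtain ⟨f₀, hf₀⟩ := hFne
    have h5 := hFT hf₀
    rw [hne] at h5
    simp at h5
  set N := T.card with hN
  have hNpos : 0 < (N : ℝ) := by
    rw [hN]; exact_mod_cast Finset.card_pos.mpr hTne
  set f : Fin n → ℝ := (N : ℝ)⁻¹ • ∑ s ∈ T, s with hfdef
  have hfT : f ∈ convexHull ℝ (T : Set (Fin n → ℝ)) := by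
    rw [Finset.mem_convexHull']
    refine ⟨fun _ => (N : ℝ)⁻¹, fun y _ => inv_nonneg.mpr hNpos.le, ?_, ?_⟩
    · rw [Finset.sum_const, nsmul_eq_mul, mul_inv_cancel₀ hNpos.ne']
    · rw [hfdef, Finset.smul_sum]
  have hfF : f ∈ F := hconvTF hfT
  -- the subspace of functionals vanishing on T
  set W : Submodule ℝ (Fin n → ℝ) :=
    { carrier := {h | ∀ s ∈ T, h ⬝ᵥ s = 0}
      add_mem' := fun ha hb s hs => by
        rw [add_dotProduct, ha s hs, hb s hs, add_zero]
      zero_mem' := fun s hs => zero_dotProduct s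
      smul_mem' := fun c h hh s hs => by rw [smul_dotProduct, hh s hs, smul_zero] } with hWdef
  have hWmem : ∀ h : Fin n → ℝ, h ∈ W ↔ ∀ s ∈ T, h ⬝ᵥ s = 0 := fun h => Iff.rfl
  -- qs maps W onto the whole space
  have htop : W.map qs = ⊤ := by
    by_contra hne
    obtain ⟨z₀, hz₀⟩ : ∃ z₀, z₀ ∉ W.map qs := by
      by_contra hcon
      push_neg at hcon
      exact hne (Submodule.eq_top_iff'.mpr hcon)
    obtain ⟨w, hw1, hw2⟩ := aux_ann _ hz₀
    have hwne : w ≠ 0 := fun h => hw2 (by rw [h, dotProduct_zero])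
    have hqwspan : q w ∈ Submodule.span ℝ (T : Set (Fin n → ℝ)) := by
      by_contra hnm
      obtain ⟨w', hw'1, hw'2⟩ := aux_ann _ hnm
      have hw'W : w' ∈ W := by
        rw [hWmem]
        intro s hs
        rw [dotProduct_comm]
        exact hw'1 s (Submodule.subset_span (Finset.mem_coe.mpr hs))
      have hzero : qs w' ⬝ᵥ w = 0 := hw1 _ (Submodule.mem_map_of_mem hw'W)
      rw [hqs] at hzero
      exact hw'2 (by rw [dotProduct_comm]; exact hzero)
    obtain ⟨cc, -, hcc⟩ := Submodule.mem_span_finset.mp hqwspan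
    have hccsum : ∑ s ∈ T, cc s = 0 := by
      have hz : ℓ ⬝ᵥ q w = 0 := by rw [← hqs, h4, zero_dotProduct]
      rw [← hcc, dot_sum'] at hz
      have heach : ∀ s ∈ T, ℓ ⬝ᵥ (cc s • s) = cc s := fun s hs => by
        rw [dotProduct_smul, smul_eq_mul, h2 s (hTF s hs), mul_one]
      rw [Finset.sum_congr rfl heach] at hz
      exact hz
    obtain ⟨t, htpos, hwnonneg⟩ :
        ∃ t : ℝ, 0 < t ∧ ∀ s ∈ T, 0 ≤ (N : ℝ)⁻¹ + t * cc s := by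
      have hB0 : 0 ≤ ∑ s ∈ T, |cc s| := Finset.sum_nonneg fun s _ => abs_nonneg _
      set B := ∑ s ∈ T, |cc s| with hB
      refine ⟨((N : ℝ) * (1 + B))⁻¹, inv_pos.mpr (mul_pos hNpos (by linarith)), ?_⟩
      intro s hs
      set t := ((N : ℝ) * (1 + B))⁻¹ with ht
      have htpos : 0 < t := inv_pos.mpr (mul_pos hNpos (by linarith))
      have habs : |cc s| ≤ B := Finset.single_le_sum (fun i _ => abs_nonneg (cc i)) hs
      have h5 : t * |cc s| ≤ t * B := mul_le_mul_of_nonneg_left habs htpos.le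
      have h6 : t * B < (N : ℝ)⁻¹ := by
        rw [ht]
        rw [mul_inv, mul_comm ((N:ℝ)⁻¹) _, mul_assoc]
        have : (1 + B)⁻¹ * B < 1 := by
          rw [inv_mul_lt_iff₀ (by linarith)]
          linarith
        nlinarith [inv_pos.mpr hNpos]
      have := neg_abs_le (cc s)
      nlinarith
    have hx₁T : f + t • q w ∈ convexHull ℝ (T : Set (Fin n → ℝ)) := by
      rw [Finset.mem_convexHull']
      refine ⟨fun y => (N : ℝ)⁻¹ + t * cc y, hwnonneg, ?_, ?_⟩
      · rw [Finset.sum_add_distrib, Finset.sum_const, nsmul_eq_mul,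
          mul_inv_cancel₀ hNpos.ne', ← Finset.mul_sum, hccsum, mul_zero, add_zero]
      · have : ∀ y ∈ T, ((N : ℝ)⁻¹ + t * cc y) • y = (N : ℝ)⁻¹ • y + t • (cc y • y) := by
          intro y _
          rw [add_smul, smul_smul]
        rw [Finset.sum_congr rfl this, Finset.sum_add_distrib, ← Finset.smul_sum,
          ← Finset.smul_sum, hcc, ← hfdef]
    have hx₁F : f + t • q w ∈ F := hconvTF hx₁T
    have hπeq : π (f + t • q w) = π f := by
      have hker : π (q w) = 0 := by
        have : q w ∈ LinearMap.ker π := hexact ▸ LinearMap.mem_range_self q w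
        exact this
      rw [map_add, π.map_smul t (q w), hker, smul_zero, add_zero]
    have := hinj hx₁F hfF hπeq
    have hqw0 : q w = 0 := by
      have h7 : t • q w = 0 := by
        have := congrArg (fun y => y - f) this
        simpa [add_sub_cancel_left] using this
      have := smul_eq_zero.mp h7
      rcases this with h | h
      · exact absurd h htpos.ne'
      · exact h
    exact hwne (hq (by rw [hqw0, map_zero]))
  -- bounded right inverse of qs restricted to W
  obtain ⟨j, hjW, hjqs⟩ : ∃ j : (Fin (n - d) → ℝ) →ₗ[ℝ] (Fin n → ℝ),
      (∀ z, ∀ s ∈ T, (j z) ⬝ᵥ s = 0) ∧ ∀ z, qs (j z) = z := by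
    have hrange : LinearMap.range (qs ∘ₗ W.subtype) = ⊤ := by
      rw [LinearMap.range_comp, Submodule.range_subtype]
      exact htop
    obtain ⟨σ, hσ⟩ := (qs ∘ₗ W.subtype).exists_rightInverse_of_surjective hrange
    refine ⟨W.subtype ∘ₗ σ, fun z => (σ z).2, fun z => ?_⟩
    have := LinearMap.congr_fun hσ z
    simpa using this
  obtain ⟨C, hC0, hjn⟩ : ∃ C : ℝ, 0 ≤ C ∧ ∀ z, ‖j z‖ ≤ C * ‖z‖ := by
    refine ⟨‖LinearMap.toContinuousLinearMap j‖, norm_nonneg _, fun z => ?_⟩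
    have := (LinearMap.toContinuousLinearMap j).le_opNorm z
    rwa [LinearMap.coe_toContinuousLinearMap'] at this
  -- there exist vertices outside T
  have hSTne : (S \ T).Nonempty := by
    rw [Finset.sdiff_nonempty]
    intro hsub
    apply hFproper
    refine Set.Subset.antisymm hFP ?_
    rw [hP]
    exact convexHull_min (fun s hs => hTF s (hsub (Finset.mem_coe.mp hs))) hFconv
  obtain ⟨δ, hδpos, hδle⟩ : ∃ δ : ℝ, 0 < δ ∧ ∀ s ∈ S \ T, δ ≤ 1 - ℓ ⬝ᵥ s := by
    refine ⟨(S \ T).inf' hSTne (fun s => 1 - ℓ ⬝ᵥ s), ?_, fun s hs => Finset.inf'_le _ hs⟩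
    rw [Finset.lt_inf'_iff]
    intro s hs
    obtain ⟨hsS, hsT⟩ := Finset.mem_sdiff.mp hs
    have hsP : s ∈ P := hSP s hsS
    have hne1 : ℓ ⬝ᵥ s ≠ 1 := fun h => hsT (Finset.mem_filter.mpr ⟨hsS, h3 s hsP h⟩)
    have := lt_of_le_of_ne (h1 s hsP) hne1
    linarith
  obtain ⟨M, hMpos, hM1⟩ : ∃ M : ℝ, 0 < M ∧ ∀ s ∈ S \ T, ‖s‖ ≤ M := by
    refine ⟨1 + (S \ T).sup' hSTne (fun s => ‖s‖), ?_, fun s hs => ?_⟩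
    · obtain ⟨s₀, hs₀⟩ := hSTne
      have h5 := Finset.le_sup' (fun s => ‖s‖) hs₀
      have := norm_nonneg s₀
      linarith
    · have := Finset.le_sup' (fun s => ‖s‖) hs
      linarith
  obtain ⟨ρ, hρpos, hρle⟩ : ∃ ρ : ℝ, 0 < ρ ∧ (n : ℝ) * C * M * ρ ≤ δ := by
    have hden : 0 < (n : ℝ) * C * M + 1 := by
      nlinarith [mul_nonneg (mul_nonneg (Nat.cast_nonneg (α := ℝ) n) hC0) hMpos.le]
    refine ⟨δ / ((n : ℝ) * C * M + 1), div_pos hδpos hden, ?_⟩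
    rw [mul_comm]
    rw [div_mul_eq_mul_div, div_le_iff₀ hden]
    nlinarith [mul_nonneg (mul_nonneg (Nat.cast_nonneg (α := ℝ) n) hC0) hMpos.le]
  rw [mem_interior]
  refine ⟨Metric.ball 0 ρ, ?_, Metric.isOpen_ball, Metric.mem_ball_self hρpos⟩
  intro z hz
  rw [Metric.mem_ball, dist_zero_right] at hz
  refine ⟨ℓ + j z, ⟨?_, ?_⟩, by rw [map_add, h4, zero_add, hjqs]⟩
  · -- bounded by 1 on P
    have hS1 : ∀ s ∈ (S : Set (Fin n → ℝ)), (ℓ + j z) ⬝ᵥ s ≤ 1 := by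
      intro s hs
      rw [add_dotProduct]
      by_cases hsT : s ∈ T
      · rw [h2 s (hTF s hsT), hjW z s hsT, add_zero]
      · have hsST : s ∈ S \ T := Finset.mem_sdiff.mpr ⟨Finset.mem_coe.mp hs, hsT⟩
        have hd : (j z) ⬝ᵥ s ≤ (n : ℝ) * ‖j z‖ * ‖s‖ := dot_le_norm _ _
        have h6 : ‖j z‖ ≤ C * ρ :=
          (hjn z).trans (mul_le_mul_of_nonneg_left hz.le hC0)
        have h5 : (n : ℝ) * ‖j z‖ * ‖s‖ ≤ (n : ℝ) * (C * ρ) * M := by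
          have hn1 : (n : ℝ) * ‖j z‖ ≤ (n : ℝ) * (C * ρ) :=
            mul_le_mul_of_nonneg_left h6 (Nat.cast_nonneg n)
          exact mul_le_mul hn1 (hM1 s hsST) (norm_nonneg s)
            (mul_nonneg (Nat.cast_nonneg _) (mul_nonneg hC0 hρpos.le))
        have h7 : (n : ℝ) * (C * ρ) * M ≤ δ := by
          calc (n : ℝ) * (C * ρ) * M = (n : ℝ) * C * M * ρ := by ring
            _ ≤ δ := hρle
        have hδs : δ ≤ 1 - ℓ ⬝ᵥ s := hδle s hsST
        linarith
    have hhalf : P ⊆ {x | (ℓ + j z) ⬝ᵥ x ≤ 1} := by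
      rw [hP]
      exact convexHull_min hS1 (convex_halfSpace_le (dot_lin _) 1)
    exact fun x hx => hhalf hx
  · -- equal to 1 on F
    have hT1 : ∀ s ∈ (T : Set (Fin n → ℝ)), (ℓ + j z) ⬝ᵥ s = 1 := fun s hs => by
      rw [add_dotProduct, h2 s (hTF s (Finset.mem_coe.mp hs)),
        hjW z s (Finset.mem_coe.mp hs), add_zero]
    have hsub : F ⊆ {x | (ℓ + j z) ⬝ᵥ x = 1} :=
      hFT.trans (convexHull_min hT1 (convex_hyperplane (dot_lin _) 1))
    exact fun x hx => hsub hx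


/-- Projection Lemma. Let `P ⊂ ℝ^n` be a full-dimensional polytope with `0` in
its interior, `π : ℝ^n → ℝ^d` a surjective linear map, `q : ℝ^{n-d} → ℝ^n` an
injection with image `ker π`, and `qs` the dual map of `q` (functionals being
represented by vectors via the dot product pairing). A proper face `F` of `P`
is strictly preserved under `π` — i.e. `π(F)` is a face of `π(P)`, `π` is
injective on `F` (so that `π(F)` is combinatorially isomorphic to `F`), and
`π⁻¹(π(F)) ∩ P = F` — if and only if `0` lies in the interior of `qs(F^◇)`,
where `F^◇ = {ℓ ∈ P^Δ : ℓ(x) = 1 ∀ x ∈ F}` is the dual face. -/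
theorem projection_lemma (n d : ℕ) (S : Finset (Fin n → ℝ))
    (P F : Set (Fin n → ℝ))
    (hP : P = convexHull ℝ (S : Set (Fin n → ℝ)))
    (h0 : (0 : Fin n → ℝ) ∈ interior P)
    (π : (Fin n → ℝ) →ₗ[ℝ] (Fin d → ℝ)) (hπ : Function.Surjective π)
    (q : (Fin (n - d) → ℝ) →ₗ[ℝ] (Fin n → ℝ)) (hq : Function.Injective q)
    (hexact : LinearMap.range q = LinearMap.ker π)
    (qs : (Fin n → ℝ) →ₗ[ℝ] (Fin (n - d) → ℝ))
    (hqs : ∀ (v : Fin n → ℝ) (w : Fin (n - d) → ℝ), qs v ⬝ᵥ w = v ⬝ᵥ q w)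
    (hF : IsExposed ℝ P F) (hFne : F.Nonempty) (hFproper : F ≠ P) :
    (IsExposed ℝ (π '' P) (π '' F) ∧ Set.InjOn π F ∧ π ⁻¹' (π '' F) ∩ P = F) ↔
      (0 : Fin (n - d) → ℝ) ∈ interior
        (qs '' {ℓ : Fin n → ℝ | (∀ x ∈ P, ℓ ⬝ᵥ x ≤ 1) ∧ ∀ x ∈ F, ℓ ⬝ᵥ x = 1}) := by
  have hFP : F ⊆ P := hF.subset
  have hFconv : Convex ℝ F := hF.convex (hP ▸ convex_convexHull ℝ _)
  constructor
  · rintro ⟨hexp, hinj, hpre⟩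
    obtain ⟨ℓ, h1, h2, h3, h4⟩ :=
      exact_of_triple h0 π hπ q hexact qs hqs hFP hFne hFproper hexp hpre
    exact forward_interior n d S hP π q hq hexact qs hqs hFP hFne hFproper hFconv hinj
      ℓ h1 h2 h3 h4
  · intro hint
    exact backward h0 π hπ q hexact qs hqs hF hFne hFproper hint
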